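/- Let ψ: ℝ → ℝ be C¹ with ψ(0)=1, ψ even, and suppose there exist C>0 and δ>1 such that |ψ(x)| + |x·ψ'(x)| ≤ C·(1+x²)^{-δ/2} for all x ∈ ℝ. Define h(x) = ψ(x) + x·ψ'(x) and, for a probability measure μ on ℝ, W_h(μ)(b,a) = (1/a)·∫_ℝ h((b−y)/a) dμ(y). Then for every b ∈ ℝ, lim_{ε→0⁺} ε·∫_ε^∞ W_h(μ)(b,a) (da/a) = μ({b}). -/

import Mathlib

open MeasureTheory Filter Real Set Topology

/-- `C / a ^ 2` is integrable on `(ε, ∞)` for `ε > 0`. -/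
lemma wavelet_aux_integrable_inv_sq {ε C : ℝ} (hε : 0 < ε) :
    Integrable (fun a : ℝ => C / a ^ 2) (volume.restrict (Ioi ε)) := by
  have h := (integrableOn_Ioi_rpow_of_lt (by norm_num : (-2 : ℝ) < -1) hε).const_mul C
  refine h.congr ?_
  filter_upwards [ae_restrict_mem measurableSet_Ioi] with a ha
  have ha0 : (0:ℝ) < a := lt_trans hε ha
  have hx : a ^ (-2 : ℝ) = (a ^ 2)⁻¹ := by
    rw [show (-2 : ℝ) = -(2:ℝ) by norm_num, rpow_neg ha0.le,
      show (2:ℝ) = ((2:ℕ) : ℝ) by norm_num, rpow_natCast]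
  rw [hx, div_eq_mul_inv]

/-- Key improper-integral computation: for `ε > 0`,
`∫_{ε}^{∞} h(c/a)/a² da = ψ(c/ε)/ε` where `h(x) = ψ(x) + x ψ'(x)`. -/
lemma wavelet_aux_inner (ψ : ℝ → ℝ) (hC1 : ContDiff ℝ 1 ψ)
    {C δ : ℝ} (hδ : (1:ℝ) < δ)
    (hbound : ∀ x : ℝ, |ψ x| + |x * deriv ψ x| ≤ C * (1 + x ^ 2) ^ (-δ / 2))
    (c : ℝ) {ε : ℝ} (hε : 0 < ε) :
    ∫ a in Ioi ε, (ψ (c / a) + (c / a) * deriv ψ (c / a)) / a ^ 2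
      = ψ (c / ε) / ε := by
  have hψcont : Continuous ψ := hC1.continuous
  have hψdiff : Differentiable ℝ ψ := hC1.differentiable one_ne_zero
  have hpow_le_one : ∀ x : ℝ, (1 + x ^ 2) ^ (-δ / 2) ≤ 1 := fun x =>
    Real.rpow_le_one_of_one_le_of_nonpos (by nlinarith [sq_nonneg x]) (by linarith)
  have hψC : ∀ x : ℝ, |ψ x| ≤ C := by
    intro x
    have := hbound x
    have h1 : |ψ x| ≤ C * (1 + x ^ 2) ^ (-δ / 2) := by
      have := abs_nonneg (x * deriv ψ x); linarith
    have hC0 : 0 ≤ C := by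
      have := abs_nonneg (ψ x)
      have hp : (0:ℝ) < (1 + x ^ 2) ^ (-δ / 2) :=
        Real.rpow_pos_of_pos (by nlinarith [sq_nonneg x]) _
      nlinarith
    calc |ψ x| ≤ C * (1 + x ^ 2) ^ (-δ / 2) := h1
      _ ≤ C * 1 := by nlinarith [hpow_le_one x]
      _ = C := mul_one C
  have hhC : ∀ x : ℝ, |ψ x + x * deriv ψ x| ≤ C := by
    intro x
    calc |ψ x + x * deriv ψ x| ≤ |ψ x| + |x * deriv ψ x| := abs_add_le _ _
      _ ≤ C * (1 + x ^ 2) ^ (-δ / 2) := hbound x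
      _ ≤ C := by
          have hC0 : 0 ≤ C := le_trans (abs_nonneg _) (hψC 0)
          nlinarith [hpow_le_one x]
  -- f a = -(ψ(c/a)/a), its derivative on (ε,∞) is the integrand
  set f : ℝ → ℝ := fun a => -(ψ (c / a) / a) with hf
  have hderiv : ∀ a ∈ Ioi ε,
      HasDerivAt f ((ψ (c / a) + (c / a) * deriv ψ (c / a)) / a ^ 2) a := by
    intro a ha
    have ha0 : (0:ℝ) < a := lt_trans hε ha
    have h1 : HasDerivAt (fun a : ℝ => c / a) (-(c / a ^ 2)) a := by
      have := (hasDerivAt_inv (ne_of_gt ha0)).const_mul c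
      simpa [div_eq_mul_inv, mul_comm, mul_assoc, neg_div] using this
    have h2 : HasDerivAt ψ (deriv ψ (c / a)) (c / a) := (hψdiff (c / a)).hasDerivAt
    have h3 : HasDerivAt (fun a : ℝ => ψ (c / a))
        (deriv ψ (c / a) * (-(c / a ^ 2))) a := h2.comp a h1
    have h4 : HasDerivAt (fun a : ℝ => ψ (c / a) / a)
        ((deriv ψ (c / a) * (-(c / a ^ 2)) * a - ψ (c / a) * 1) / a ^ 2) a :=
      h3.div (hasDerivAt_id a) (ne_of_gt ha0)
    have h5 : HasDerivAt f
        (-((deriv ψ (c / a) * (-(c / a ^ 2)) * a - ψ (c / a) * 1) / a ^ 2)) a := h4.neg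
    convert h5 using 1
    field_simp
    ring
  have hcont : ContinuousWithinAt f (Ici ε) ε := by
    have : ContinuousAt f ε := by
      have h1 : ContinuousAt (fun a : ℝ => c / a) ε :=
        (continuousAt_const.div continuousAt_id (ne_of_gt hε))
      exact ((hψcont.continuousAt.comp h1).div continuousAt_id (ne_of_gt hε)).neg
    exact this.continuousWithinAt
  have hint : IntegrableOn
      (fun a => (ψ (c / a) + (c / a) * deriv ψ (c / a)) / a ^ 2) (Ioi ε) := by
    refine (wavelet_aux_integrable_inv_sq (C := C) hε).mono' ?_ ?_
    · apply ContinuousOn.aestronglyMeasurable ?_ measurableSet_Ioi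
      intro a ha
      have ha0 : (0:ℝ) < a := lt_trans hε ha
      have h1 : ContinuousWithinAt (fun a : ℝ => c / a) (Ioi ε) a :=
        (continuousAt_const.div continuousAt_id (ne_of_gt ha0)).continuousWithinAt
      exact (((hψcont.continuousAt.comp_continuousWithinAt h1).add
        (h1.mul ((hC1.continuous_deriv le_rfl).continuousAt.comp_continuousWithinAt h1))).div
        (continuousWithinAt_id.pow 2) (by positivity))
    · filter_upwards [ae_restrict_mem measurableSet_Ioi] with a ha
      have ha0 : (0:ℝ) < a := lt_trans hε ha
      rw [Real.norm_eq_abs, abs_div, abs_of_pos (by positivity : (0:ℝ) < a ^ 2)]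
      exact (div_le_div_iff_of_pos_right (by positivity)).mpr (hhC _)
  have hlim : Tendsto f atTop (𝓝 0) := by
    have hg : Tendsto (fun a : ℝ => C / a) atTop (𝓝 0) :=
      tendsto_const_nhds.div_atTop tendsto_id
    refine squeeze_zero_norm' ?_ hg
    filter_upwards [eventually_gt_atTop 0] with a ha
    rw [hf]
    rw [norm_neg, Real.norm_eq_abs, abs_div, abs_of_pos ha]
    exact (div_le_div_iff_of_pos_right ha).mpr (hψC _)
  have := integral_Ioi_of_hasDerivAt_of_tendsto hcont hderiv hint hlim
  rw [this, hf]
  simp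

theorem wavelet_transform_recovers_point_mass
    (ψ : ℝ → ℝ) (hC1 : ContDiff ℝ 1 ψ) (hψ0 : ψ 0 = 1)
    (heven : ∀ x : ℝ, ψ (-x) = ψ x)
    (hdecay : ∃ C > (0:ℝ), ∃ δ > (1:ℝ), ∀ x : ℝ,
      |ψ x| + |x * deriv ψ x| ≤ C * (1 + x ^ 2) ^ (-δ / 2))
    (μ : Measure ℝ) [IsProbabilityMeasure μ] (b : ℝ) :
    Tendsto (fun ε : ℝ => ε *
        ∫ a in Ioi ε,
          ((1 / a) * ∫ y : ℝ,
            (ψ ((b - y) / a) + ((b - y) / a) * deriv ψ ((b - y) / a)) ∂μ) / a)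
      (𝓝[>] 0) (𝓝 (μ {b}).toReal) := by
  obtain ⟨C, hC, δ, hδ, hbound⟩ := hdecay
  have hψcont : Continuous ψ := hC1.continuous
  have hψ'cont : Continuous (deriv ψ) := hC1.continuous_deriv le_rfl
  have hpow_le_one : ∀ x : ℝ, (1 + x ^ 2) ^ (-δ / 2) ≤ 1 := fun x =>
    Real.rpow_le_one_of_one_le_of_nonpos (by nlinarith [sq_nonneg x]) (by linarith)
  have hψdecay : ∀ x : ℝ, |ψ x| ≤ C * (1 + x ^ 2) ^ (-δ / 2) := by
    intro x
    have := hbound x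
    have := abs_nonneg (x * deriv ψ x)
    linarith
  have hψC : ∀ x : ℝ, |ψ x| ≤ C := fun x =>
    (hψdecay x).trans (by nlinarith [hpow_le_one x])
  have hhC : ∀ x : ℝ, |ψ x + x * deriv ψ x| ≤ C := fun x =>
    ((abs_add_le _ _).trans (hbound x)).trans (by nlinarith [hpow_le_one x])
  -- Step 1: for ε > 0 the expression equals ∫ ψ((b-y)/ε) dμ
  have key : ∀ ε : ℝ, 0 < ε →
      ε * (∫ a in Ioi ε,
        ((1 / a) * ∫ y : ℝ,
          (ψ ((b - y) / a) + ((b - y) / a) * deriv ψ ((b - y) / a)) ∂μ) / a)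
      = ∫ y : ℝ, ψ ((b - y) / ε) ∂μ := by
    intro ε hε
    have step1 : (∫ a in Ioi ε,
        ((1 / a) * ∫ y : ℝ,
          (ψ ((b - y) / a) + ((b - y) / a) * deriv ψ ((b - y) / a)) ∂μ) / a)
        = ∫ a in Ioi ε, ∫ y : ℝ,
            (ψ ((b - y) / a) + ((b - y) / a) * deriv ψ ((b - y) / a)) / a ^ 2 ∂μ := by
      refine setIntegral_congr_fun measurableSet_Ioi (fun a ha => ?_)
      have ha0 : (0:ℝ) < a := lt_trans hε ha
      rw [integral_div]
      ring
    -- integrability on the product for Fubini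
    have hmeas : Measurable (fun z : ℝ × ℝ =>
        (ψ ((b - z.2) / z.1) + ((b - z.2) / z.1) * deriv ψ ((b - z.2) / z.1)) / z.1 ^ 2) := by
      have h1 : Measurable (fun z : ℝ × ℝ => (b - z.2) / z.1) :=
        (measurable_const.sub measurable_snd).div measurable_fst
      exact ((hψcont.measurable.comp h1).add
        (h1.mul (hψ'cont.measurable.comp h1))).div ((measurable_fst.pow_const 2))
    have hprod : Integrable
        (fun z : ℝ × ℝ =>
          (ψ ((b - z.2) / z.1) + ((b - z.2) / z.1) * deriv ψ ((b - z.2) / z.1)) / z.1 ^ 2)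
        ((volume.restrict (Ioi ε)).prod μ) := by
      rw [integrable_prod_iff (hmeas.aestronglyMeasurable)]
      constructor
      · filter_upwards [ae_restrict_mem measurableSet_Ioi] with a ha
        have ha0 : (0:ℝ) < a := lt_trans hε ha
        refine (integrable_const (C / a ^ 2)).mono' ?_ ?_
        · have h1 : Continuous (fun y : ℝ => (b - y) / a) :=
            (continuous_const.sub continuous_id).div_const a
          exact (((hψcont.comp h1).add
            (h1.mul (hψ'cont.comp h1))).div_const (a ^ 2)).aestronglyMeasurable
        · refine Eventually.of_forall (fun y => ?_)
          rw [Real.norm_eq_abs, abs_div, abs_of_pos (by positivity : (0:ℝ) < a ^ 2)]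
          exact (div_le_div_iff_of_pos_right (by positivity)).mpr (hhC _)
      · refine (wavelet_aux_integrable_inv_sq (C := C) hε).mono' ?_ ?_
        · exact (MeasureTheory.StronglyMeasurable.integral_prod_right
            (f := fun a y : ℝ =>
              ‖(ψ ((b - y) / a) + ((b - y) / a) * deriv ψ ((b - y) / a)) / a ^ 2‖)
            hmeas.norm.stronglyMeasurable).aestronglyMeasurable
        · filter_upwards [ae_restrict_mem measurableSet_Ioi] with a ha
          have ha0 : (0:ℝ) < a := lt_trans hε ha
          have hnn : 0 ≤ ∫ y : ℝ,
              ‖(ψ ((b - y) / a) + ((b - y) / a) * deriv ψ ((b - y) / a)) / a ^ 2‖ ∂μ :=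
            integral_nonneg (fun y => norm_nonneg _)
          rw [Real.norm_of_nonneg hnn]
          calc (∫ y : ℝ,
              ‖(ψ ((b - y) / a) + ((b - y) / a) * deriv ψ ((b - y) / a)) / a ^ 2‖ ∂μ)
              ≤ ∫ _ : ℝ, C / a ^ 2 ∂μ := by
                refine integral_mono_of_nonneg (Eventually.of_forall fun y => norm_nonneg _)
                  (integrable_const _) (Eventually.of_forall fun y => ?_)
                simp only [Real.norm_eq_abs, abs_div]
                rw [abs_of_pos (show (0:ℝ) < a ^ 2 by positivity)]
                exact (div_le_div_iff_of_pos_right (by positivity)).mpr (hhC _)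
            _ = C / a ^ 2 := by simp
    have step2 : (∫ a in Ioi ε, ∫ y : ℝ,
          (ψ ((b - y) / a) + ((b - y) / a) * deriv ψ ((b - y) / a)) / a ^ 2 ∂μ)
        = ∫ y : ℝ, (∫ a in Ioi ε,
            (ψ ((b - y) / a) + ((b - y) / a) * deriv ψ ((b - y) / a)) / a ^ 2) ∂μ := by
      exact integral_integral_swap (f := fun a y : ℝ =>
        (ψ ((b - y) / a) + ((b - y) / a) * deriv ψ ((b - y) / a)) / a ^ 2) hprod
    have step3 : (∫ y : ℝ, (∫ a in Ioi ε,
          (ψ ((b - y) / a) + ((b - y) / a) * deriv ψ ((b - y) / a)) / a ^ 2) ∂μ)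
        = ∫ y : ℝ, ψ ((b - y) / ε) / ε ∂μ := by
      refine integral_congr_ae (Eventually.of_forall fun y => ?_)
      exact wavelet_aux_inner ψ hC1 hδ hbound (b - y) hε
    rw [step1, step2, step3, integral_div, ← mul_div_assoc,
      mul_div_cancel_left₀ _ (ne_of_gt hε)]
  -- Step 2: ∫ ψ((b-y)/ε) dμ → μ {b} as ε → 0⁺
  have main : Tendsto (fun ε : ℝ => ∫ y : ℝ, ψ ((b - y) / ε) ∂μ)
      (𝓝[>] (0:ℝ)) (𝓝 (μ {b}).toReal) := by
    have hind : (∫ y : ℝ, ({b} : Set ℝ).indicator (fun _ => (1:ℝ)) y ∂μ)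
        = (μ {b}).toReal := by
      rw [integral_indicator (measurableSet_singleton b)]
      simp
    rw [← hind]
    refine tendsto_integral_filter_of_dominated_convergence (fun _ => C) ?_ ?_
      (integrable_const C) ?_
    · refine Eventually.of_forall (fun ε => ?_)
      exact (hψcont.comp ((continuous_const.sub continuous_id).div_const ε)).aestronglyMeasurable
    · exact Eventually.of_forall (fun ε =>
        Eventually.of_forall (fun y => by rw [Real.norm_eq_abs]; exact hψC _))
    · refine Eventually.of_forall (fun y => ?_)
      by_cases hy : y = b
      · subst hy
        simp only [sub_self, zero_div, hψ0]
        simp [indicator_of_mem (mem_singleton y)]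
      · have hne : b - y ≠ 0 := sub_ne_zero.mpr (Ne.symm hy)
        have hlim0 : Tendsto (fun ε : ℝ => ψ ((b - y) / ε)) (𝓝[>] (0:ℝ)) (𝓝 0) := by
          have h1 : Tendsto (fun ε : ℝ => |b - y| * ε⁻¹) (𝓝[>] (0:ℝ)) atTop :=
            (tendsto_inv_nhdsGT_zero).const_mul_atTop (abs_pos.mpr hne)
          have h2 : Tendsto (fun ε : ℝ => (|b - y| * ε⁻¹) ^ 2) (𝓝[>] (0:ℝ)) atTop :=
            (tendsto_pow_atTop (two_ne_zero)).comp h1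
          have h2' : Tendsto (fun ε : ℝ => ((b - y) / ε) ^ 2) (𝓝[>] (0:ℝ)) atTop := by
            refine h2.congr (fun ε => ?_)
            rw [mul_pow, ← abs_pow, abs_of_nonneg (sq_nonneg _), div_pow,
              div_eq_mul_inv, inv_pow]
          have h3 : Tendsto (fun ε : ℝ => 1 + ((b - y) / ε) ^ 2) (𝓝[>] (0:ℝ)) atTop :=
            tendsto_atTop_add_const_left _ 1 h2'
          have h4 : Tendsto (fun ε : ℝ => (1 + ((b - y) / ε) ^ 2) ^ (-δ / 2))
              (𝓝[>] (0:ℝ)) (𝓝 0) := by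
            have := (tendsto_rpow_neg_atTop (by linarith : (0:ℝ) < δ / 2)).comp h3
            simpa [neg_div, Function.comp_def] using this
          have h5 : Tendsto (fun ε : ℝ => C * (1 + ((b - y) / ε) ^ 2) ^ (-δ / 2))
              (𝓝[>] (0:ℝ)) (𝓝 0) := by
            simpa using h4.const_mul C
          exact squeeze_zero_norm (fun ε => by
            rw [Real.norm_eq_abs]; exact hψdecay _) h5
        have : ({b} : Set ℝ).indicator (fun _ => (1:ℝ)) y = 0 :=
          indicator_of_notMem (by simpa using hy) _
        rw [this]
        exact hlim0
  refine main.congr' ?_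
  filter_upwards [self_mem_nhdsWithin] with ε (hε : ε ∈ Ioi (0:ℝ))
  exact (key ε hε).symm
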